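/- For every real x > 300, π(x) − π(x/2) > (1/log x)·(x/6 − 3√x), where π is the prime counting function. -/

import Mathlib

open Finset Nat

theorem aux_cb (n : ℕ) (hn : 3 ≤ n) :
    Nat.centralBinom n ≤
      (2 * n) ^ (Nat.primeCounting' (Nat.sqrt (2 * n) + 1)) * 4 ^ (2 * n / 3) *
        (2 * n) ^ (Nat.primeCounting (2 * n) - Nat.primeCounting n) := by
  have n2_pos : 0 < 2 * n := by omega
  set s := Nat.sqrt (2 * n) with hs
  set f : ℕ → ℕ := fun p => p ^ (Nat.centralBinom n).factorization p with hf
  set S := (range (2 * n + 1)).filter Nat.Prime with hS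
  have h0 : Nat.centralBinom n = ∏ p ∈ S, f p := by
    rw [hS, Finset.prod_filter_of_ne, Nat.prod_pow_factorization_centralBinom]
    intro p _ h
    contrapose! h
    rw [hf]
    simp [Nat.factorization_eq_zero_of_not_prime _ h]
  rw [h0, ← Finset.prod_filter_mul_prod_filter_not S (· ≤ s),
    ← Finset.prod_filter_mul_prod_filter_not (S.filter (¬ · ≤ s)) (· ≤ n)]
  rw [mul_assoc]
  gcongr ?_ * (?_ * ?_) -- hope: splits into three prods
  · -- small primes
    calc ∏ p ∈ S.filter (· ≤ s), f p ≤ ∏ _p ∈ S.filter (· ≤ s), 2 * n := by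
          apply Finset.prod_le_prod' -- maybe name differs
          intro p _
          exact Nat.pow_factorization_choose_le n2_pos
      _ = (2 * n) ^ (S.filter (· ≤ s)).card := by rw [Finset.prod_const]
      _ ≤ (2 * n) ^ (Nat.primeCounting' (s + 1)) := by
          apply Nat.pow_le_pow_right (by omega)
          rw [← primesBelow_card_eq_primeCounting']
          apply Finset.card_le_card
          intro p hp
          simp only [hS, Nat.primesBelow, Finset.mem_filter, Finset.mem_range] at hp ⊢
          exact ⟨by omega, hp.1.2⟩
  · -- middle primes
    calc ∏ p ∈ (S.filter (¬ · ≤ s)).filter (· ≤ n), f p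
        ≤ ∏ p ∈ ((S.filter (¬ · ≤ s)).filter (· ≤ n)).filter (· ≤ 2 * n / 3), p := by
          rw [← Finset.prod_filter_mul_prod_filter_not ((S.filter (¬ · ≤ s)).filter (· ≤ n)) (· ≤ 2 * n / 3)]
          have h1 : ∏ p ∈ (((S.filter (¬ · ≤ s)).filter (· ≤ n)).filter (¬ · ≤ 2 * n / 3)), f p = 1 := by
            apply Finset.prod_eq_one
            intro p hp
            simp only [hS, Finset.mem_filter, Finset.mem_range] at hp
            have hbig : 2 * n < 3 * p := by
              have := hp.2
              rw [not_le] at this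
              have := (Nat.div_lt_iff_lt_mul (by norm_num)).mp this
              omega
            simp only [hf,
              Nat.factorization_centralBinom_of_two_mul_self_lt_three_mul (by omega) hp.1.2 hbig,
              pow_zero]
          rw [h1, mul_one]
          apply Finset.prod_le_prod'
          intro p hp
          simp only [hS, Finset.mem_filter, Finset.mem_range, not_le] at hp
          have h2 : 2 * n < p ^ 2 := Nat.sqrt_lt'.mp hp.1.1.2
          calc f p ≤ p ^ 1 := Nat.pow_le_pow_right (hp.1.1.1.2.one_lt.le) (Nat.factorization_choose_le_one h2)
            _ = p := pow_one p
      _ ≤ primorial (2 * n / 3) := by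
          apply Finset.prod_le_prod_of_subset_of_one_le'
          · intro p hp
            simp only [hS, primorial, Finset.mem_filter, Finset.mem_range] at hp ⊢
            exact ⟨by omega, hp.1.1.1.2⟩
          · intro p hp _
            simp only [primorial, Finset.mem_filter] at hp
            exact hp.2.one_lt.le
      _ ≤ 4 ^ (2 * n / 3) := primorial_le_4_pow _
  · -- large primes
    calc ∏ p ∈ (S.filter (¬ · ≤ s)).filter (¬ · ≤ n), f p
        ≤ ∏ _p ∈ (S.filter (¬ · ≤ s)).filter (¬ · ≤ n), 2 * n := by
          apply Finset.prod_le_prod'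
          intro p _
          exact Nat.pow_factorization_choose_le n2_pos
      _ = (2 * n) ^ ((S.filter (¬ · ≤ s)).filter (¬ · ≤ n)).card := by rw [Finset.prod_const]
      _ ≤ (2 * n) ^ (Nat.primeCounting (2 * n) - Nat.primeCounting n) := by
          apply Nat.pow_le_pow_right (by omega)
          have hsub : Nat.primesBelow (n + 1) ⊆ Nat.primesBelow (2 * n + 1) := by
            intro p hp
            simp only [Nat.primesBelow, Finset.mem_filter, Finset.mem_range] at hp ⊢
            exact ⟨by omega, hp.2⟩
          have : Nat.primeCounting (2 * n) - Nat.primeCounting n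
              = ((Nat.primesBelow (2 * n + 1)) \ (Nat.primesBelow (n + 1))).card := by
            rw [Finset.card_sdiff_of_subset hsub, primesBelow_card_eq_primeCounting',
              primesBelow_card_eq_primeCounting']
            rfl
          rw [this]
          apply Finset.card_le_card
          intro p hp
          simp only [hS, Nat.primesBelow, Finset.mem_filter, Finset.mem_range, Finset.mem_sdiff,
            not_le, not_and, not_lt] at hp ⊢
          refine ⟨⟨hp.1.1.1, hp.1.1.2⟩, ?_⟩
          intro hlt
          omega

-- numeric facts
theorem num1 : (2:ℝ) ≤ 3 * Real.log 2 := by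
  have h8 : Real.exp 2 ≤ 8 := by
    have := Real.exp_one_lt_d9
    have h : Real.exp 2 = Real.exp 1 ^ 2 := by
      rw [← Real.exp_nat_mul]; norm_num
    nlinarith [Real.exp_pos 1]
  have : Real.log (Real.exp 2) ≤ Real.log 8 := Real.log_le_log (Real.exp_pos 2) h8
  rw [Real.log_exp] at this
  have h8' : Real.log 8 = 3 * Real.log 2 := by
    rw [show (8:ℝ) = 2 ^ 3 by norm_num, Real.log_pow]; push_cast; ring
  linarith

theorem num2 : Real.log 2 + 2 * Real.log 3 ≤ 34 / 9 := by
  have h18 : Real.log 18 < 3 := by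
    rw [Real.log_lt_iff_lt_exp (by norm_num)]
    have h : Real.exp 3 = Real.exp 1 ^ 3 := by
      rw [← Real.exp_nat_mul]; norm_num
    have h2 : (2.7182818283:ℝ) ^ 3 < Real.exp 1 ^ 3 := by
      apply pow_lt_pow_left₀ Real.exp_one_gt_d9 (by norm_num)
      norm_num
    rw [h]; nlinarith
  have e : Real.log 18 = Real.log 2 + 2 * Real.log 3 := by
    rw [show (18:ℝ) = 2 * 3 ^ 2 by norm_num, Real.log_mul (by norm_num) (by norm_num),
      Real.log_pow]
    push_cast; ring
  linarith

theorem num3 : 132 * Real.log 3 ≤ 259 * Real.log 2 := by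
  have h : ((3:ℝ) ^ (132:ℕ)) ≤ 2 ^ (259:ℕ) := by exact_mod_cast (Nat.le_of_ble_eq_true rfl : (3:ℕ)^132 ≤ 2^259)
  have := Real.log_le_log (by positivity) h
  rw [Real.log_pow, Real.log_pow] at this
  push_cast at this
  linarith

-- the core real inequality
theorem key_ineq (x : ℝ) (hx : 300 < x) (h18 : 18 ≤ Real.sqrt x) :
    x / 6 - 3 * Real.sqrt x ≤
      (x - 2) / 6 * Real.log 4 - Real.log (x / 2) - (Real.sqrt x + 2) / 2 * Real.log x := by
  have hx0 : (0:ℝ) < x := by linarith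
  set t := Real.sqrt x with ht
  have hx_t : x = t ^ 2 := by rw [ht, Real.sq_sqrt hx0.le]
  have ht0 : (0:ℝ) < t := by linarith
  have hlogx : Real.log x = 2 * Real.log t := by
    rw [hx_t, Real.log_pow]; push_cast; ring
  have hlogx2 : Real.log (x / 2) = 2 * Real.log t - Real.log 2 := by
    rw [Real.log_div (by positivity) (by norm_num), hlogx]
  have hlog4 : Real.log 4 = 2 * Real.log 2 := by
    rw [show (4:ℝ) = 2 ^ 2 by norm_num, Real.log_pow]; push_cast; ring
  have hl18 : Real.log 18 = Real.log 2 + 2 * Real.log 3 := by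
    rw [show (18:ℝ) = 2 * 3 ^ 2 by norm_num, Real.log_mul (by norm_num) (by norm_num),
      Real.log_pow]
    push_cast; ring
  -- tangent bound
  have htan : Real.log t ≤ Real.log 2 + 2 * Real.log 3 - 1 + t / 18 := by
    have h := Real.log_le_sub_one_of_pos (show (0:ℝ) < t / 18 by positivity)
    rw [Real.log_div (by positivity) (by norm_num)] at h
    linarith
  have e1 : (t + 4) * Real.log t ≤ (t + 4) * (Real.log 2 + 2 * Real.log 3 - 1 + t / 18) :=
    mul_le_mul_of_nonneg_left htan (by linarith)
  have e2 : 0 ≤ (3 * Real.log 2 - 2) / 9 * ((t - 18) * (t + 18)) :=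
    mul_nonneg (by linarith [num1]) (by nlinarith)
  have e3 : 0 ≤ (34 / 9 - (Real.log 2 + 2 * Real.log 3)) * (t - 18) :=
    mul_nonneg (by linarith [num2]) (by linarith)
  rw [hlogx, hlogx2, hlog4, hx_t]
  nlinarith [num3, e1, e2, e3]

theorem stmt_10 (x : ℝ) (hx : 300 < x) :
    (1 / Real.log x) * (x / 6 - 3 * Real.sqrt x) <
      (Nat.primeCounting ⌊x⌋₊ : ℝ) - (Nat.primeCounting ⌊x / 2⌋₊ : ℝ) := by
  have hx0 : (0:ℝ) < x := by linarith
  set m := ⌊x⌋₊ with hm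
  have hm300 : 300 ≤ m := Nat.le_floor (by exact_mod_cast hx.le)
  have hmx : (m:ℝ) ≤ x := Nat.floor_le hx0.le
  have hxm : x < m + 1 := Nat.lt_floor_add_one x
  have hdiv : ⌊x / 2⌋₊ = m / 2 := by
    rw [hm, show (2:ℝ) = ((2:ℕ):ℝ) by norm_num, Nat.floor_div_natCast]
  set n := m / 2 with hn
  have h2n1 : 2 * n ≤ m := by omega
  have h2n2 : m ≤ 2 * n + 1 := by omega
  have hn150 : 150 ≤ n := by omega
  have hNx : ((2 * n : ℕ) : ℝ) ≤ x := le_trans (by exact_mod_cast h2n1) hmx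
  have hxN : x - 2 ≤ ((2 * n : ℕ) : ℝ) := by
    have : (m : ℝ) ≤ (2 * n : ℕ) + 1 := by exact_mod_cast h2n2
    linarith
  -- Bertrand: π m ≥ π n + 1
  have hpi1 : n.primeCounting + 1 ≤ m.primeCounting := by
    obtain ⟨p, pp, hp1, hp2⟩ := Nat.exists_prime_lt_and_le_two_mul n (by omega)
    have e1 : p.primeCounting = p.primeCounting' + 1 := by
      rw [Nat.primeCounting, Nat.primeCounting', Nat.count_succ, if_pos pp]
    have e2 : n.primeCounting ≤ p.primeCounting' := by
      rw [Nat.primeCounting]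
      exact Nat.monotone_primeCounting' hp1
    have e3 : p.primeCounting ≤ m.primeCounting :=
      Nat.monotone_primeCounting (le_trans hp2 h2n1)
    omega
  have hpimono : n.primeCounting ≤ (2 * n).primeCounting :=
    Nat.monotone_primeCounting (by omega)
  have hpimono2 : (2 * n).primeCounting ≤ m.primeCounting :=
    Nat.monotone_primeCounting h2n1
  rw [hdiv]
  have hlx : 0 < Real.log x := Real.log_pos (by linarith)
  rw [one_div_mul_eq_div, div_lt_iff₀ hlx]
  have hpicast : (1:ℝ) ≤ (m.primeCounting : ℝ) - (n.primeCounting : ℝ) := by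
    have : ((n.primeCounting + 1 : ℕ) : ℝ) ≤ (m.primeCounting : ℝ) := by exact_mod_cast hpi1
    push_cast at this
    linarith
  rcases lt_or_ge (Real.sqrt x) 18 with h18 | h18
  · -- LHS negative
    have hsq : Real.sqrt x * Real.sqrt x = x := Real.mul_self_sqrt hx0.le
    have hsx : 0 < Real.sqrt x := Real.sqrt_pos.mpr hx0
    have hneg : x / 6 - 3 * Real.sqrt x < 0 := by nlinarith
    nlinarith
  · -- main case
    set s := Nat.sqrt (2 * n) with hs
    set c := Nat.primeCounting' (s + 1) with hc
    set Δ := Nat.primeCounting (2 * n) - Nat.primeCounting n with hΔ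
    have K : 4 ^ n < n * ((2 * n) ^ c * 4 ^ (2 * n / 3) * (2 * n) ^ Δ) :=
      lt_of_lt_of_le (Nat.four_pow_lt_mul_centralBinom n (by omega))
        (Nat.mul_le_mul_left _ (aux_cb n (by omega)))
    have hnR : (0:ℝ) < (n:ℝ) := by exact_mod_cast (by omega : 0 < n)
    have KR : (4:ℝ) ^ n < (n:ℝ) * ((2 * (n:ℝ)) ^ c * 4 ^ (2 * n / 3) * (2 * (n:ℝ)) ^ Δ) := by
      exact_mod_cast K
    have KL := Real.log_lt_log (by positivity) KR
    rw [Real.log_pow, Real.log_mul (by positivity) (by positivity),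
      Real.log_mul (by positivity) (by positivity),
      Real.log_mul (by positivity) (by positivity),
      Real.log_pow, Real.log_pow, Real.log_pow] at KL
    set L2n := Real.log (2 * (n:ℝ)) with hL2n
    have hn150R : (150:ℝ) ≤ (n:ℝ) := by exact_mod_cast hn150
    have hL2npos : 0 < L2n := Real.log_pos (by linarith)
    have hNxR : 2 * (n:ℝ) ≤ x := by push_cast at hNx; linarith
    have hxNR : x - 2 ≤ 2 * (n:ℝ) := by push_cast at hxN; linarith
    have hL2nx : L2n ≤ Real.log x := Real.log_le_log (by positivity) hNxR
    have hT : ((2 * n / 3 : ℕ) : ℝ) ≤ 2 * (n:ℝ) / 3 := by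
      have := Nat.cast_div_le (α := ℝ) (m := 2 * n) (n := 3)
      push_cast at this ⊢
      linarith
    have hlog4pos : 0 < Real.log 4 := Real.log_pos (by norm_num)
    have hTlog : ((2 * n / 3 : ℕ) : ℝ) * Real.log 4 ≤ 2 * (n:ℝ) / 3 * Real.log 4 :=
      mul_le_mul_of_nonneg_right hT hlog4pos.le
    -- bound on c
    have hs2 : 2 ≤ s := by
      rw [hs]
      have : 2 * 2 ≤ 2 * n := by omega
      calc 2 = Nat.sqrt 4 := by norm_num
        _ ≤ Nat.sqrt (2 * n) := Nat.sqrt_le_sqrt (by omega)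
    have hcn : c ≤ (s - 2) / 2 + 2 := by
      have h := Nat.primeCounting'_add_le (a := 2) (k := 3) (by norm_num) (by norm_num) (s - 2)
      rw [show 3 + (s - 2) = s + 1 by omega] at h
      have h3 : Nat.primeCounting' 3 = 1 := by decide
      have ht2 : Nat.totient 2 = 1 := by decide
      rw [h3, ht2, one_mul] at h
      omega
    have hsR : (s : ℝ) ≤ Real.sqrt x := by
      have h1 : (s : ℝ) ≤ Real.sqrt ((2 * n : ℕ) : ℝ) := Real.nat_sqrt_le_real_sqrt
      have h2 : Real.sqrt ((2 * n : ℕ) : ℝ) ≤ Real.sqrt x := Real.sqrt_le_sqrt hNx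
      linarith
    have hcR : (c : ℝ) ≤ (Real.sqrt x + 2) / 2 := by
      have h1 : (c : ℝ) ≤ (((s - 2) / 2 : ℕ) : ℝ) + 2 := by exact_mod_cast hcn
      have h2 : (((s - 2) / 2 : ℕ) : ℝ) ≤ ((s - 2 : ℕ) : ℝ) / 2 := Nat.cast_div_le
      have h3 : ((s - 2 : ℕ) : ℝ) = (s : ℝ) - 2 := by
        rw [Nat.cast_sub hs2]; norm_num
      rw [h3] at h2
      linarith
    have hclog : (c : ℝ) * L2n ≤ (Real.sqrt x + 2) / 2 * Real.log x := by
      apply mul_le_mul hcR hL2nx hL2npos.le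
      positivity
    -- assemble
    have hkey := key_ineq x hx h18
    have step1 : (x - 2) / 6 * Real.log 4 ≤ (n:ℝ) / 3 * Real.log 4 :=
      mul_le_mul_of_nonneg_right (by linarith) hlog4pos.le
    have step2 : Real.log (n:ℝ) ≤ Real.log (x / 2) :=
      Real.log_le_log (by positivity) (by linarith)
    have hΔle : (Δ : ℝ) ≤ (m.primeCounting : ℝ) - (n.primeCounting : ℝ) := by
      rw [hΔ]
      rw [Nat.cast_sub hpimono]
      have : ((2 * n).primeCounting : ℝ) ≤ (m.primeCounting : ℝ) := by exact_mod_cast hpimono2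
      linarith
    have hΔlog1 : (Δ : ℝ) * L2n ≤ (Δ : ℝ) * Real.log x :=
      mul_le_mul_of_nonneg_left hL2nx (Nat.cast_nonneg Δ)
    have hΔlog2 : (Δ : ℝ) * Real.log x ≤ ((m.primeCounting : ℝ) - (n.primeCounting : ℝ)) * Real.log x :=
      mul_le_mul_of_nonneg_right hΔle hlx.le
    linarith [KL, hTlog, step1, step2, hclog, hkey, hΔlog1, hΔlog2]
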